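/- The intersection of two big subsets of D^{<ℕ} is big, and any superset of a big set is big. -/
import Mathlib


variable {D : Type*} [Preorder D] [IsDirected D (· ≤ ·)] [Nonempty D]

/-- A subset of a directed set is cofinal if every element has an upper bound in it. -/
def Cofinal (S : Set D) : Prop := ∀ u : D, ∃ v ∈ S, u ≤ v

/-- A subset is eventual if its complement is not cofinal. -/
def Eventual (S : Set D) : Prop := ¬ Cofinal Sᶜ

/-- Inevitable subsets of the tree of nonempty finite sequences from `D`. -/
def Inevitable (B : Set (List D)) : Prop :=
  Eventual {u : D | [u] ∈ B} ∧
    ∀ t ∈ B, t ≠ [] → Eventual {u : D | t ++ [u] ∈ B}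

/-- A set of finite sequences is big if it contains an inevitable subset. -/
def Big (B : Set (List D)) : Prop := ∃ B' : Set (List D), B' ⊆ B ∧ Inevitable B'


lemma eventual_iff {S : Set D} : Eventual S ↔ ∃ u : D, ∀ v, u ≤ v → v ∈ S := by
  unfold Eventual Cofinal
  push_neg
  simp only [Set.mem_compl_iff]
  constructor
  · rintro ⟨u, hu⟩
    exact ⟨u, fun v hv => by_contra fun h => hu v h hv⟩
  · rintro ⟨u, hu⟩
    exact ⟨u, fun v hv h => hv (hu v h)⟩

lemma eventual_inter {S T : Set D} (hS : Eventual S) (hT : Eventual T) :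
    Eventual (S ∩ T) := by
  rw [eventual_iff] at hS hT ⊢
  obtain ⟨u, hu⟩ := hS
  obtain ⟨w, hw⟩ := hT
  obtain ⟨z, hz1, hz2⟩ := directed_of (· ≤ ·) u w
  exact ⟨z, fun v hv => ⟨hu v (hz1.trans hv), hw v (hz2.trans hv)⟩⟩

/-- The intersection of two big subsets of `D^{<ℕ}` is big, and any superset of a
big set is big. -/
theorem big_inter_and_big_superset (B₁ B₂ C : Set (List D)) (h₁ : Big B₁)
    (h₂ : Big B₂) (hC : B₁ ⊆ C) : Big (B₁ ∩ B₂) ∧ Big C := by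
  obtain ⟨A₁, hA₁, hI₁⟩ := h₁
  obtain ⟨A₂, hA₂, hI₂⟩ := h₂
  constructor
  · refine ⟨A₁ ∩ A₂, fun t ht => ⟨hA₁ ht.1, hA₂ ht.2⟩, ?_, ?_⟩
    · exact eventual_inter hI₁.1 hI₂.1
    · intro t ht hne
      exact eventual_inter (hI₁.2 t ht.1 hne) (hI₂.2 t ht.2 hne)
  · exact ⟨A₁, fun t ht => hC (hA₁ ht), hI₁⟩
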